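/- Let X and Y be real locally convex topological vector spaces and let F : X ⇒ Y be a set-valued mapping whose graph is quasi-nearly convex. Then: (a) if gph(F) is quasi-regular (i.e., qri(gph(F)) = iri(gph(F))), then qri(gph(F)) ⊂ {(x,y) ∈ X × Y : x ∈ qri(dom(F)), y ∈ qri(F(x))}; (b) if F(x) is quasi-nearly convex and qi(F(x)) ≠ ∅ for every x ∈ dom(F), then qri(gph(F)) ⊃ {(x,y) ∈ X × Y : x ∈ qri(dom(F)), y ∈ qri(F(x))}. Consequently, under all of these assumptions, qri(gph(F)) = {(x,y) : x ∈ qri(dom(F)), y ∈ qri(F(x))}. -/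

import Mathlib

open Pointwise Set

/-- Conic hull: `cone(A) = {λa : λ ≥ 0, a ∈ A}`. -/
def coneHull {Z : Type*} [AddCommGroup Z] [Module ℝ Z] (A : Set Z) : Set Z :=
  {y | ∃ c : ℝ, 0 ≤ c ∧ ∃ a ∈ A, y = c • a}

/-- A set is a linear subspace if it underlies some `ℝ`-submodule. -/
def IsLinearSubspace {Z : Type*} [AddCommGroup Z] [Module ℝ Z] (S : Set Z) : Prop :=
  ∃ L : Submodule ℝ Z, (L : Set Z) = S

/-- Intrinsic relative interior. -/
def iri {Z : Type*} [AddCommGroup Z] [Module ℝ Z] (A : Set Z) : Set Z :=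
  {x ∈ A | IsLinearSubspace (coneHull (A - {x}))}

/-- Quasi-interior. -/
def qi {Z : Type*} [AddCommGroup Z] [Module ℝ Z] [TopologicalSpace Z] (A : Set Z) : Set Z :=
  {x ∈ A | closure (coneHull (A - {x})) = univ}

/-- Quasi-relative interior. -/
def qri {Z : Type*} [AddCommGroup Z] [Module ℝ Z] [TopologicalSpace Z] (A : Set Z) : Set Z :=
  {x ∈ A | IsLinearSubspace (closure (coneHull (A - {x})))}

/-- A set is quasi-nearly convex if it is squeezed between a convex set with
nonempty quasi-relative interior and its closure. -/
def QuasiNearlyConvex {Z : Type*} [AddCommGroup Z] [Module ℝ Z] [TopologicalSpace Z]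
    (A : Set Z) : Prop :=
  ∃ C : Set Z, Convex ℝ C ∧ (qri C).Nonempty ∧ C ⊆ A ∧ A ⊆ closure C

/-- Domain of a set-valued mapping. -/
def svmDom {X Y : Type*} (F : X → Set Y) : Set X := {x | (F x).Nonempty}

/-- Graph of a set-valued mapping. -/
def svmGph {X Y : Type*} (F : X → Set Y) : Set (X × Y) := {p | p.2 ∈ F p.1}

section Aux
variable {Z : Type*} [AddCommGroup Z] [Module ℝ Z]

lemma mem_coneHull_sub {A : Set Z} {p z : Z} :
    z ∈ coneHull (A - {p}) ↔ ∃ c : ℝ, 0 ≤ c ∧ ∃ a ∈ A, z = c • (a - p) := by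
  constructor
  · rintro ⟨c, hc, a, ha, rfl⟩
    rw [sub_singleton] at ha
    rcases ha with ⟨b, hb, rfl⟩
    exact ⟨c, hc, b, hb, rfl⟩
  · rintro ⟨c, hc, a, ha, rfl⟩
    exact ⟨c, hc, a - p, by rw [sub_singleton]; exact ⟨a, ha, rfl⟩, rfl⟩

lemma self_sub_mem_coneHull {A : Set Z} {p a : Z} (ha : a ∈ A) :
    a - p ∈ coneHull (A - {p}) :=
  mem_coneHull_sub.2 ⟨1, zero_le_one, a, ha, (one_smul ℝ _).symm⟩

lemma smul_mem_coneHull {A : Set Z} {c : ℝ} (hc : 0 ≤ c) {z : Z} (hz : z ∈ coneHull A) :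
    c • z ∈ coneHull A := by
  rcases hz with ⟨d, hd, a, ha, rfl⟩
  exact ⟨c * d, mul_nonneg hc hd, a, ha, smul_smul c d a⟩

lemma convex_coneHull {C : Set Z} (hC : Convex ℝ C) : Convex ℝ (coneHull C) := by
  rintro x ⟨c, hc, a, ha, rfl⟩ y ⟨d, hd, b, hb, rfl⟩ s t hs ht hst
  by_cases hz : s * c + t * d = 0
  · have h1 : s * c = 0 := by nlinarith [mul_nonneg hs hc, mul_nonneg ht hd]
    have h2 : t * d = 0 := by nlinarith [mul_nonneg hs hc, mul_nonneg ht hd]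
    refine ⟨0, le_refl 0, a, ha, ?_⟩
    rw [smul_smul, smul_smul, h1, h2]
    simp
  · set e := s * c + t * d with he
    have hepos : 0 < e := lt_of_le_of_ne (by positivity) (Ne.symm hz)
    refine ⟨e, hepos.le, (s * c / e) • a + (t * d / e) • b,
      hC ha hb (by positivity) (by positivity) (by field_simp; exact he.symm), ?_⟩
    rw [smul_add, smul_smul, smul_smul, smul_smul, smul_smul]
    rw [mul_div_cancel₀ _ hepos.ne', mul_div_cancel₀ _ hepos.ne']

end Aux

section AuxT
variable {Z : Type*} [AddCommGroup Z] [Module ℝ Z] [TopologicalSpace Z]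
  [IsTopologicalAddGroup Z] [ContinuousSMul ℝ Z]

/-- The closure of the cone hull is the same for a nearly convex set and its carrier. -/
lemma closure_coneHull_congr {C A : Set Z} (h1 : C ⊆ A) (h2 : A ⊆ closure C) (p : Z) :
    closure (coneHull (A - {p})) = closure (coneHull (C - {p})) := by
  apply Subset.antisymm
  · rw [show closure (coneHull (C - {p})) = closure (closure (coneHull (C - {p}))) from
      closure_closure.symm]
    apply closure_mono
    rintro z hz
    rcases mem_coneHull_sub.1 hz with ⟨c, hc, a, ha, rfl⟩
    have ha' : a - p ∈ closure (C - {p}) := by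
      rw [sub_singleton]
      exact image_closure_subset_closure_image (by fun_prop) ⟨a, h2 ha, rfl⟩
    have h3 : c • (a - p) ∈ (fun z => c • z) '' closure (C - {p}) := ⟨a - p, ha', rfl⟩
    have h4 := image_closure_subset_closure_image (f := fun z => c • z) (by fun_prop) h3
    refine closure_mono ?_ h4
    rintro w ⟨v, hv, rfl⟩
    exact smul_mem_coneHull hc ⟨1, zero_le_one, v, hv, (one_smul ℝ v).symm⟩
  · apply closure_mono
    rintro z hz
    rcases mem_coneHull_sub.1 hz with ⟨c, hc, a, ha, rfl⟩
    exact mem_coneHull_sub.2 ⟨c, hc, a, h1 ha, rfl⟩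

omit [IsTopologicalAddGroup Z] [ContinuousSMul ℝ Z] in
/-- If the quasi-interior is nonempty, every quasi-relative interior point is a
quasi-interior point. -/
lemma closure_coneHull_eq_univ_of_qri {A : Set Z} (hqi : (qi A).Nonempty)
    {x : Z} (hx : x ∈ qri A) :
    closure (coneHull (A - {x})) = univ := by
  obtain ⟨y, hyA, hyu⟩ := hqi
  obtain ⟨hxA, L, hL⟩ := hx
  have hclosed : IsClosed (L : Set Z) := hL ▸ isClosed_closure
  have hsubL : coneHull (A - {y}) ⊆ (L : Set Z) := by
    rintro z hz
    rcases mem_coneHull_sub.1 hz with ⟨c, hc, a, ha, rfl⟩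
    have h1 : a - x ∈ L := by
      have : a - x ∈ (L : Set Z) := by
        rw [hL]; exact subset_closure (self_sub_mem_coneHull ha)
      exact this
    have h2 : y - x ∈ L := by
      have : y - x ∈ (L : Set Z) := by
        rw [hL]; exact subset_closure (self_sub_mem_coneHull hyA)
      exact this
    have h3 : a - y ∈ L := by
      have := L.sub_mem h1 h2
      rwa [sub_sub_sub_cancel_right] at this
    exact L.smul_mem c h3
  have huL : (univ : Set Z) ⊆ (L : Set Z) := by
    rw [← hyu]
    exact hclosed.closure_subset_iff.2 hsubL
  rw [hL] at huL
  exact eq_univ_of_univ_subset huL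

end AuxT

theorem stmt19_parta {X Y : Type*}
    [AddCommGroup X] [Module ℝ X] [TopologicalSpace X]
    [IsTopologicalAddGroup X] [ContinuousSMul ℝ X]
    [AddCommGroup Y] [Module ℝ Y] [TopologicalSpace Y]
    [IsTopologicalAddGroup Y] [ContinuousSMul ℝ Y]
    (F : X → Set Y) (heq : qri (svmGph F) = iri (svmGph F)) :
    qri (svmGph F) ⊆ {p : X × Y | p.1 ∈ qri (svmDom F) ∧ p.2 ∈ qri (F p.1)} := by
  rintro ⟨x₀, y₀⟩ hp
  rw [heq] at hp
  obtain ⟨hpg, L, hL⟩ := hp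
  have hy₀ : y₀ ∈ F x₀ := hpg
  constructor
  · -- x₀ ∈ qri (svmDom F)
    refine ⟨⟨y₀, hy₀⟩, ?_⟩
    have himg : coneHull (svmDom F - {x₀}) = (LinearMap.fst ℝ X Y) '' (L : Set (X × Y)) := by
      ext u
      constructor
      · rintro hu
        rcases mem_coneHull_sub.1 hu with ⟨c, hc, x, hx, rfl⟩
        obtain ⟨y, hy⟩ := hx
        refine ⟨c • ((x, y) - (x₀, y₀)), ?_, by simp⟩
        rw [hL]
        exact mem_coneHull_sub.2 ⟨c, hc, (x, y), hy, rfl⟩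
      · rintro ⟨z, hz, rfl⟩
        rw [hL] at hz
        rcases mem_coneHull_sub.1 hz with ⟨c, hc, q, hq, rfl⟩
        obtain ⟨x, y⟩ := q
        exact mem_coneHull_sub.2 ⟨c, hc, x, ⟨y, hq⟩, by simp⟩
    refine ⟨(L.map (LinearMap.fst ℝ X Y)).topologicalClosure, ?_⟩
    rw [Submodule.topologicalClosure_coe, Submodule.map_coe, ← himg]
  · -- y₀ ∈ qri (F x₀)
    refine ⟨hy₀, ?_⟩
    have hKL : ∀ v, v ∈ coneHull (F x₀ - {y₀}) → ((0 : X), v) ∈ (L : Set (X × Y)) := by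
      intro v hv
      rcases mem_coneHull_sub.1 hv with ⟨c, hc, y, hy, rfl⟩
      rw [hL]
      refine mem_coneHull_sub.2 ⟨c, hc, (x₀, y), hy, ?_⟩
      simp [Prod.ext_iff]
    have hLK : ∀ v : Y, ((0 : X), v) ∈ (L : Set (X × Y)) → v ∈ coneHull (F x₀ - {y₀}) := by
      intro v hv
      rw [hL] at hv
      rcases mem_coneHull_sub.1 hv with ⟨c, hc, q, hq, hEq⟩
      obtain ⟨x, y⟩ := q
      by_cases hc0 : c = 0
      · have hv0 : v = 0 := by
          have := congrArg Prod.snd hEq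
          simpa [hc0] using this
        exact hv0 ▸ mem_coneHull_sub.2 ⟨0, le_refl 0, y₀, hy₀, by simp⟩
      · have h1 : c • (x - x₀) = 0 := by
          have := congrArg Prod.fst hEq
          simpa using this.symm
        have hx : x = x₀ := by
          have h0 : x - x₀ = 0 := by
            have := congrArg (fun w => c⁻¹ • w) h1
            simpa [smul_smul, inv_mul_cancel₀ hc0] using this
          exact sub_eq_zero.1 h0
        have hyF : y ∈ F x₀ := hx ▸ hq
        have h2 : v = c • (y - y₀) := by
          have := congrArg Prod.snd hEq
          simpa using this
        exact h2 ▸ mem_coneHull_sub.2 ⟨c, hc, y, hyF, rfl⟩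
    let K : Submodule ℝ Y :=
      { carrier := coneHull (F x₀ - {y₀})
        zero_mem' := mem_coneHull_sub.2 ⟨0, le_refl 0, y₀, hy₀, by simp⟩
        add_mem' := by
          intro a b ha hb
          refine hLK _ ?_
          have := L.add_mem (hKL a ha) (hKL b hb)
          simpa using this
        smul_mem' := by
          intro r v hv
          refine hLK _ ?_
          have := L.smul_mem r (hKL v hv)
          simpa [Prod.smul_def] using this }
    refine ⟨K.topologicalClosure, ?_⟩
    rw [Submodule.topologicalClosure_coe]
    rfl

theorem stmt19_partb {X Y : Type*}
    [AddCommGroup X] [Module ℝ X] [TopologicalSpace X]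
    [IsTopologicalAddGroup X] [ContinuousSMul ℝ X]
    [AddCommGroup Y] [Module ℝ Y] [TopologicalSpace Y]
    [IsTopologicalAddGroup Y] [ContinuousSMul ℝ Y]
    (F : X → Set Y) (h : QuasiNearlyConvex (svmGph F))
    (hb : ∀ x ∈ svmDom F, (qi (F x)).Nonempty) :
    {p : X × Y | p.1 ∈ qri (svmDom F) ∧ p.2 ∈ qri (F p.1)} ⊆ qri (svmGph F) := by
  rintro ⟨x₀, y₀⟩ ⟨hx, hy⟩
  have hy₀ : y₀ ∈ F x₀ := hy.1
  have hdom : x₀ ∈ svmDom F := ⟨y₀, hy₀⟩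
  have huniv : closure (coneHull (F x₀ - {y₀})) = univ :=
    closure_coneHull_eq_univ_of_qri (hb x₀ hdom) hy
  obtain ⟨C, hCconv, -, hC1, hC2⟩ := h
  set p : X × Y := (x₀, y₀) with hp
  set M := closure (coneHull (svmGph F - {p})) with hMdef
  have hM : M = closure (coneHull (C - {p})) := closure_coneHull_congr hC1 hC2 p
  have hMconv : Convex ℝ M := by
    rw [hM]
    exact (convex_coneHull (hCconv.sub (convex_singleton p))).closure
  have hMsmul : ∀ c : ℝ, 0 ≤ c → ∀ z ∈ M, c • z ∈ M := by
    intro c hc z hz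
    have h3 : c • z ∈ (fun w => c • w) '' M := ⟨z, hz, rfl⟩
    have h4 := image_closure_subset_closure_image (f := fun w : X × Y => c • w) (by fun_prop) h3
    refine closure_mono ?_ h4
    rintro w ⟨v, hv, rfl⟩
    exact smul_mem_coneHull hc hv
  have hMadd : ∀ a ∈ M, ∀ b ∈ M, a + b ∈ M := by
    intro a ha b hb'
    have hmid := hMconv ha hb' (by norm_num : (0:ℝ) ≤ 1/2) (by norm_num : (0:ℝ) ≤ 1/2)
      (by norm_num)
    have h2 := hMsmul 2 (by norm_num) _ hmid
    have heq2 : (2:ℝ) • ((1/2 : ℝ) • a + (1/2 : ℝ) • b) = a + b := by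
      rw [smul_add, smul_smul, smul_smul]
      norm_num
    rwa [heq2] at h2
  have hvert : ∀ w : Y, ((0 : X), w) ∈ M := by
    intro w
    have hw : w ∈ closure (coneHull (F x₀ - {y₀})) := huniv ▸ mem_univ w
    have h3 : ((0 : X), w) ∈ (fun v : Y => ((0 : X), v)) '' closure (coneHull (F x₀ - {y₀})) :=
      ⟨w, hw, rfl⟩
    have h4 := image_closure_subset_closure_image (f := fun v : Y => ((0 : X), v))
      (by fun_prop) h3
    refine closure_mono ?_ h4
    rintro z ⟨v, hv, rfl⟩
    rcases mem_coneHull_sub.1 hv with ⟨c, hc, y, hyF, rfl⟩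
    refine mem_coneHull_sub.2 ⟨c, hc, (x₀, y), hyF, ?_⟩
    simp [Prod.ext_iff, hp]
  obtain ⟨Lx, hLx⟩ := hx.2
  have hsub2 : coneHull (svmDom F - {x₀}) ×ˢ (univ : Set Y) ⊆ M := by
    rintro ⟨u, v⟩ ⟨hu, -⟩
    rcases mem_coneHull_sub.1 hu with ⟨c, hc, x, hx', hueq⟩
    obtain ⟨y, hyF⟩ := hx'
    have h1 : (u, c • (y - y₀)) ∈ M := by
      refine subset_closure (mem_coneHull_sub.2 ⟨c, hc, (x, y), hyF, ?_⟩)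
      rw [show u = c • (x - x₀) from hueq]
      simp [hp, Prod.ext_iff]
    have h2 := hvert (v - c • (y - y₀))
    have h3 := hMadd _ h1 _ h2
    simpa using h3
  have hS : M = (Lx : Set X) ×ˢ (univ : Set Y) := by
    apply Subset.antisymm
    · have hsub : coneHull (svmGph F - {p}) ⊆ (Lx : Set X) ×ˢ (univ : Set Y) := by
        rintro z hz
        rcases mem_coneHull_sub.1 hz with ⟨c, hc, q, hq, rfl⟩
        obtain ⟨x, y⟩ := q
        refine ⟨?_, mem_univ _⟩
        rw [hLx]
        have h5 : c • (x - x₀) ∈ coneHull (svmDom F - {x₀}) :=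
          mem_coneHull_sub.2 ⟨c, hc, x, ⟨y, hq⟩, rfl⟩
        have : (c • ((x, y) - p)).1 = c • (x - x₀) := by simp [hp]
        rw [this]
        exact subset_closure h5
      have hcl : IsClosed ((Lx : Set X) ×ˢ (univ : Set Y)) :=
        (hLx ▸ isClosed_closure).prod isClosed_univ
      exact hcl.closure_subset_iff.2 hsub
    · rw [hLx]
      calc closure (coneHull (svmDom F - {x₀})) ×ˢ (univ : Set Y)
          = closure ((coneHull (svmDom F - {x₀})) ×ˢ (univ : Set Y)) := by
            rw [closure_prod_eq, closure_univ]
        _ ⊆ closure M := closure_mono hsub2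
        _ = M := by rw [hMdef, closure_closure]
  refine ⟨hy₀, ⟨Lx.prod ⊤, ?_⟩⟩
  rw [show ((Lx.prod (⊤ : Submodule ℝ Y) : Submodule ℝ (X × Y)) : Set (X × Y))
      = (Lx : Set X) ×ˢ (univ : Set Y) from rfl, ← hS]

theorem stmt19 {X Y : Type*}
    [AddCommGroup X] [Module ℝ X] [TopologicalSpace X]
    [IsTopologicalAddGroup X] [ContinuousSMul ℝ X] [LocallyConvexSpace ℝ X]
    [AddCommGroup Y] [Module ℝ Y] [TopologicalSpace Y]
    [IsTopologicalAddGroup Y] [ContinuousSMul ℝ Y] [LocallyConvexSpace ℝ Y]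
    (F : X → Set Y) (h : QuasiNearlyConvex (svmGph F)) :
    (qri (svmGph F) = iri (svmGph F) →
      qri (svmGph F) ⊆ {p : X × Y | p.1 ∈ qri (svmDom F) ∧ p.2 ∈ qri (F p.1)}) ∧
    ((∀ x ∈ svmDom F, QuasiNearlyConvex (F x) ∧ (qi (F x)).Nonempty) →
      {p : X × Y | p.1 ∈ qri (svmDom F) ∧ p.2 ∈ qri (F p.1)} ⊆ qri (svmGph F)) ∧
    (qri (svmGph F) = iri (svmGph F) →
      (∀ x ∈ svmDom F, QuasiNearlyConvex (F x) ∧ (qi (F x)).Nonempty) →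
      qri (svmGph F) = {p : X × Y | p.1 ∈ qri (svmDom F) ∧ p.2 ∈ qri (F p.1)}) := by
  refine ⟨fun heq => stmt19_parta F heq,
    fun hb => stmt19_partb F h (fun x hx => (hb x hx).2),
    fun heq hb => Subset.antisymm (stmt19_parta F heq)
      (stmt19_partb F h (fun x hx => (hb x hx).2))⟩
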